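/- arXiv:1211.4170 — 3 statements merged into one kernel-verified Lean document; each statement's English description precedes it below -/
import Mathlib

section
/- Assume λ₁ = 0 (hence m₁ = 0) and m₀f₀ ≥ s (strong unfair mutation), and let u be a C^∞ classical solution of (K1) with u ≤ 1. Then for all x ∈ [0,1] and t ≥ 0: if m₀f₀ > s, 1 ≥ u(x,t) ≥ 1 − (1−x)/(1 + (s(1−x)/(m₀f₀−s))(e^{(m₀f₀−s)t} − 1)); and if m₀f₀ = s, 1 ≥ u(x,t) ≥ 1 − (1−x)/(1 + s(1−x)t). In particular u(x,t) → 1 as t → ∞ for every x ∈ [0,1], so ū = 1 as for the quasispecies dynamics. -/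
open Set Filter Topology

noncomputable def pd1 (F : ℝ × ℝ → ℝ) (p : ℝ × ℝ) : ℝ := fderiv ℝ F p (1, 0)
noncomputable def pd2 (F : ℝ × ℝ → ℝ) (p : ℝ × ℝ) : ℝ := fderiv ℝ F p (0, 1)

lemma contDiff_pd1 {F : ℝ × ℝ → ℝ} (hF : ContDiff ℝ (⊤ : ℕ∞) F) : ContDiff ℝ (⊤ : ℕ∞) (pd1 F) :=
  (hF.fderiv_right (by simp)).clm_apply contDiff_const

lemma contDiff_pd2 {F : ℝ × ℝ → ℝ} (hF : ContDiff ℝ (⊤ : ℕ∞) F) : ContDiff ℝ (⊤ : ℕ∞) (pd2 F) :=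
  (hF.fderiv_right (by simp)).clm_apply contDiff_const

lemma hasDerivAt_pd1 {F : ℝ × ℝ → ℝ} (hF : ContDiff ℝ (⊤ : ℕ∞) F) (x t : ℝ) :
    HasDerivAt (fun x' => F (x', t)) (pd1 F (x, t)) x := by
  have h := (hF.differentiable (by simp) (x, t)).hasFDerivAt
  have := h.comp_hasDerivAt x ((hasDerivAt_id x).prodMk (hasDerivAt_const x t))
  exact this

lemma hasDerivAt_pd2 {F : ℝ × ℝ → ℝ} (hF : ContDiff ℝ (⊤ : ℕ∞) F) (x t : ℝ) :
    HasDerivAt (fun τ => F (x, τ)) (pd2 F (x, t)) t := by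
  have h := (hF.differentiable (by simp) (x, t)).hasFDerivAt
  have := h.comp_hasDerivAt t ((hasDerivAt_const t x).prodMk (hasDerivAt_id t))
  exact this

lemma fderiv_eval {F : ℝ × ℝ → ℝ} (hF : ContDiff ℝ (⊤ : ℕ∞) F) (p v w : ℝ × ℝ) :
    fderiv ℝ (fun q => fderiv ℝ F q v) p w = fderiv ℝ (fderiv ℝ F) p w v := by
  have hd : DifferentiableAt ℝ (fderiv ℝ F) p :=
    ((hF.fderiv_right (m := (⊤ : ℕ∞)) (by simp)).differentiable (by simp)).differentiableAt
  have h : HasFDerivAt (fun q => fderiv ℝ F q v)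
      (((ContinuousLinearMap.apply ℝ ℝ) v).comp (fderiv ℝ (fderiv ℝ F) p)) p :=
    ((ContinuousLinearMap.apply ℝ ℝ v).hasFDerivAt (x := fderiv ℝ F p)).comp p hd.hasFDerivAt
  rw [h.fderiv]; rfl

lemma clairaut {F : ℝ × ℝ → ℝ} (hF : ContDiff ℝ (⊤ : ℕ∞) F) (p : ℝ × ℝ) :
    pd1 (pd2 F) p = pd2 (pd1 F) p := by
  have hsymm : IsSymmSndFDerivAt ℝ F p := hF.contDiffAt.isSymmSndFDerivAt (by
    rw [minSmoothness_of_isRCLikeNormedField]; exact WithTop.coe_le_coe.mpr (le_top : (2:ℕ∞) ≤ ⊤))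
  unfold pd1 pd2
  rw [fderiv_eval hF, fderiv_eval hF]
  exact hsymm _ _

set_option maxHeartbeats 1000000 in
lemma keyD (f0 g0 l0 s m0 : ℝ) (u : ℝ → ℝ → ℝ)
    (hspos : 0 < s) (hf0 : 0 < f0)
    (hg0 : g0 ∈ Set.Ioc (0:ℝ) 1)
    (hl0 : 0 ≤ l0)
    (hm0 : m0 = l0 * g0)
    (hu_smooth : ContDiff ℝ (⊤ : ℕ∞) (Function.uncurry u))
    (hu_pde : ∀ x ∈ Set.Icc (0:ℝ) 1, ∀ t > (0:ℝ),
      pd2 (Function.uncurry u) (x, t)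
        + s * (1 - x) * x * pd1 (Function.uncurry u) (x, t)
        = l0 * f0 * (u (x + g0 * (1 - x)) t - u x t))
    (hu_init : ∀ x ∈ Set.Icc (0:ℝ) 1, u x 0 = x) :
    ∀ x ∈ Set.Icc (0:ℝ) 1, ∀ t ≥ (0:ℝ),
      s * (1 - u x t)^2 + (m0 * f0 - s) * (1 - u x t) ≤ pd2 (Function.uncurry u) (x, t) := by
  have hsne : s ≠ 0 := ne_of_gt hspos
  set a : ℝ := m0 * f0 - s with ha
  set U : ℝ × ℝ → ℝ := Function.uncurry u with hUdef
  have hUxt : ∀ x t : ℝ, U (x, t) = u x t := fun x t => rfl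
  set c : ℝ → ℝ := fun x => s * (1 - x) * x with hc
  set Y : ℝ → ℝ := fun x => x + g0 * (1 - x) with hY
  have hYIcc : ∀ x ∈ Set.Icc (0:ℝ) 1, Y x ∈ Set.Icc (0:ℝ) 1 := by
    intro x hx
    obtain ⟨h0, h1⟩ := hx
    constructor
    · have : 0 ≤ g0 * (1 - x) := mul_nonneg (le_of_lt hg0.1) (by linarith)
      simp only [hY]; linarith
    · have : g0 * (1 - x) ≤ 1 * (1 - x) := by
        apply mul_le_mul_of_nonneg_right hg0.2 (by linarith)
      simp only [hY]; linarith
  set D : ℝ × ℝ → ℝ := fun p => pd2 U p + a * (U p - 1) - s * (1 - U p)^2 with hD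
  -- smoothness facts
  have hU2 : ContDiff ℝ (⊤ : ℕ∞) (pd2 U) := contDiff_pd2 hu_smooth
  have hU1 : ContDiff ℝ (⊤ : ℕ∞) (pd1 U) := contDiff_pd1 hu_smooth
  have hUcont : Continuous U := hu_smooth.continuous
  have hDcont : Continuous D := by
    apply Continuous.sub
    · exact (hU2.continuous.add (continuous_const.mul (hUcont.sub continuous_const)))
    · exact continuous_const.mul ((continuous_const.sub hUcont).pow 2)
  -- t-derivative of D
  have hD_t : ∀ x t : ℝ, HasDerivAt (fun τ => D (x, τ))
      (pd2 (pd2 U) (x, t) + a * pd2 U (x, t) + 2 * s * (1 - U (x, t)) * pd2 U (x, t)) t := by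
    intro x t
    have h1 : HasDerivAt (fun τ => pd2 U (x, τ)) (pd2 (pd2 U) (x, t)) t :=
      hasDerivAt_pd2 hU2 x t
    have h2 : HasDerivAt (fun τ => U (x, τ)) (pd2 U (x, t)) t := hasDerivAt_pd2 hu_smooth x t
    have h3 := (h1.add ((h2.sub_const 1).const_mul a)).sub
      ((((h2.const_sub 1)).pow 2).const_mul s)
    refine h3.congr_deriv ?_
    ring
  -- x-derivative of D
  have hD_x : ∀ x t : ℝ, HasDerivAt (fun x' => D (x', t))
      (pd1 (pd2 U) (x, t) + a * pd1 U (x, t) + 2 * s * (1 - U (x, t)) * pd1 U (x, t)) x := by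
    intro x t
    have h1 : HasDerivAt (fun x' => pd2 U (x', t)) (pd1 (pd2 U) (x, t)) x :=
      hasDerivAt_pd1 hU2 x t
    have h2 : HasDerivAt (fun x' => U (x', t)) (pd1 U (x, t)) x := hasDerivAt_pd1 hu_smooth x t
    have h3 := (h1.add ((h2.sub_const 1).const_mul a)).sub
      ((((h2.const_sub 1)).pow 2).const_mul s)
    refine h3.congr_deriv ?_
    ring
  -- differentiated (in t) PDE
  have hpde2 : ∀ x ∈ Set.Icc (0:ℝ) 1, ∀ t > (0:ℝ),
      pd2 (pd2 U) (x, t) + c x * pd1 (pd2 U) (x, t)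
        = l0 * f0 * (pd2 U (Y x, t) - pd2 U (x, t)) := by
    intro x hx t ht
    set phi : ℝ → ℝ := fun τ => pd2 U (x, τ) + c x * pd1 U (x, τ)
      - l0 * f0 * (U (Y x, τ) - U (x, τ)) with hphi
    have hphi0 : ∀ τ ∈ Set.Ioi (0:ℝ), phi τ = 0 := by
      intro τ hτ
      have h := hu_pde x hx τ hτ
      simp only [hphi, hUxt, hc, hY]
      linarith [h]
    have hder : HasDerivAt phi
        (pd2 (pd2 U) (x, t) + c x * pd2 (pd1 U) (x, t)
          - l0 * f0 * (pd2 U (Y x, t) - pd2 U (x, t))) t := by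
      have h1 : HasDerivAt (fun τ => pd2 U (x, τ)) (pd2 (pd2 U) (x, t)) t :=
        hasDerivAt_pd2 hU2 x t
      have h2 : HasDerivAt (fun τ => pd1 U (x, τ)) (pd2 (pd1 U) (x, t)) t :=
        hasDerivAt_pd2 hU1 x t
      have h3 : HasDerivAt (fun τ => U (Y x, τ)) (pd2 U (Y x, t)) t :=
        hasDerivAt_pd2 hu_smooth (Y x) t
      have h4 : HasDerivAt (fun τ => U (x, τ)) (pd2 U (x, t)) t := hasDerivAt_pd2 hu_smooth x t
      exact (h1.add (h2.const_mul (c x))).sub ((h3.sub h4).const_mul (l0 * f0))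
    have hz : deriv phi t = 0 := by
      have hev : phi =ᶠ[𝓝 t] (fun _ => 0) := by
        filter_upwards [isOpen_Ioi.mem_nhds ht] with τ hτ
        exact hphi0 τ hτ
      rw [hev.deriv_eq]
      simp
    have := hder.deriv
    rw [hz] at this
    have hcl := clairaut hu_smooth (x, t)
    rw [← hcl] at this
    linarith [this]
  -- initial values
  have hUx0 : ∀ x ∈ Set.Icc (0:ℝ) 1, pd1 U (x, 0) = 1 := by
    have hcont : Continuous (fun x' => pd1 U (x', 0)) :=
      hU1.continuous.comp (by fun_prop)
    have hioo : EqOn (fun x' => pd1 U (x', 0)) (fun _ => (1:ℝ)) (Ioo 0 1) := by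
      intro x hx
      have hder : deriv (fun y => u y 0) x = pd1 U (x, 0) :=
        (hasDerivAt_pd1 hu_smooth x 0).deriv
      have hev : (fun y => u y 0) =ᶠ[𝓝 x] id := by
        filter_upwards [isOpen_Ioo.mem_nhds hx] with y hy
        exact hu_init y (Ioo_subset_Icc_self hy)
      have := hev.deriv_eq
      simp only [deriv_id] at this
      simp only [← hder, this]
    have hclos : EqOn (fun x' => pd1 U (x', 0)) (fun _ => (1:ℝ)) (closure (Ioo 0 1)) :=
      hioo.closure hcont continuous_const
    rw [closure_Ioo (by norm_num : (0:ℝ) ≠ 1)] at hclos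
    exact fun x hx => hclos hx
  have hUt0 : ∀ x ∈ Set.Icc (0:ℝ) 1, pd2 U (x, 0) = - c x + l0 * f0 * (g0 * (1 - x)) := by
    intro x hx
    set phi : ℝ → ℝ := fun τ => pd2 U (x, τ) + c x * pd1 U (x, τ)
      - l0 * f0 * (U (Y x, τ) - U (x, τ)) with hphi
    have hphicont : Continuous phi := by
      have c1 : Continuous (fun τ => pd2 U (x, τ)) := hU2.continuous.comp (by fun_prop)
      have c2 : Continuous (fun τ => pd1 U (x, τ)) := hU1.continuous.comp (by fun_prop)
      have c3 : Continuous (fun τ => U (Y x, τ)) := hUcont.comp (by fun_prop)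
      have c4 : Continuous (fun τ => U (x, τ)) := hUcont.comp (by fun_prop)
      exact (c1.add (continuous_const.mul c2)).sub (continuous_const.mul (c3.sub c4))
    have hioi : EqOn phi (fun _ => (0:ℝ)) (Ioi 0) := by
      intro τ hτ
      have h := hu_pde x hx τ hτ
      simp only [hphi, hUxt, hc, hY]
      linarith [h]
    have hclos : EqOn phi (fun _ => (0:ℝ)) (closure (Ioi 0)) :=
      hioi.closure hphicont continuous_const
    rw [closure_Ioi] at hclos
    have h0 : phi 0 = 0 := hclos (by exact Set.self_mem_Ici)
    simp only [hphi] at h0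
    rw [hUx0 x hx] at h0
    have e1 : U (Y x, 0) = Y x := hu_init (Y x) (hYIcc x hx)
    have e2 : U (x, 0) = x := hu_init x hx
    rw [e1, e2] at h0
    have : Y x - x = g0 * (1 - x) := by simp only [hY]; ring
    rw [this] at h0
    linarith [h0]
  have hD0 : ∀ x ∈ Set.Icc (0:ℝ) 1, D (x, 0) = 0 := by
    intro x hx
    simp only [hD, hUxt]
    rw [hUt0 x hx, hu_init x hx]
    simp only [hc, ha, hm0]
    ring
  -- PDE satisfied by D
  have hD_pde : ∀ x ∈ Set.Icc (0:ℝ) 1, ∀ t > (0:ℝ),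
      (pd2 (pd2 U) (x, t) + a * pd2 U (x, t) + 2 * s * (1 - U (x, t)) * pd2 U (x, t))
        + c x * (pd1 (pd2 U) (x, t) + a * pd1 U (x, t) + 2 * s * (1 - U (x, t)) * pd1 U (x, t))
        = l0 * f0 * (D (Y x, t) - D (x, t)) + s * (l0 * f0) * (U (Y x, t) - U (x, t))^2 := by
    intro x hx t ht
    have h1 : pd2 U (x, t) + c x * pd1 U (x, t) = l0 * f0 * (U (Y x, t) - U (x, t)) := by
      have h := hu_pde x hx t ht
      simp only [hc, hY, hUxt]
      linarith [h]
    have h2 := hpde2 x hx t ht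
    simp only [hD]
    linear_combination h2 + (a + 2 * s * (1 - U (x, t))) * h1
  -- maximum principle
  have main : ∀ T > (0:ℝ), ∀ ε > (0:ℝ), ∀ x ∈ Set.Icc (0:ℝ) 1, ∀ t ∈ Set.Icc (0:ℝ) T,
      -(ε * Real.exp t) < D (x, t) := by
    intro T hT ε hε
    by_contra hcon
    push_neg at hcon
    obtain ⟨x₁, hx₁, t₁, ht₁, hle⟩ := hcon
    set S : Set (ℝ × ℝ) := {q | q.1 ∈ Set.Icc (0:ℝ) 1 ∧ q.2 ∈ Set.Icc (0:ℝ) T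
      ∧ D q + ε * Real.exp q.2 ≤ 0} with hS
    have hSne : S.Nonempty := ⟨(x₁, t₁), hx₁, ht₁, by linarith⟩
    have hSclosed : IsClosed S := by
      have h1 : IsClosed {q : ℝ × ℝ | q.1 ∈ Set.Icc (0:ℝ) 1} :=
        isClosed_Icc.preimage continuous_fst
      have h2 : IsClosed {q : ℝ × ℝ | q.2 ∈ Set.Icc (0:ℝ) T} :=
        isClosed_Icc.preimage continuous_snd
      have h3 : IsClosed {q : ℝ × ℝ | D q + ε * Real.exp q.2 ≤ 0} :=
        isClosed_le (hDcont.add (continuous_const.mul (Real.continuous_exp.comp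
          continuous_snd))) continuous_const
      have hSeq : S = {q : ℝ × ℝ | q.1 ∈ Set.Icc (0:ℝ) 1} ∩
          ({q : ℝ × ℝ | q.2 ∈ Set.Icc (0:ℝ) T} ∩ {q : ℝ × ℝ | D q + ε * Real.exp q.2 ≤ 0}) := by
        ext q
        simp only [hS, Set.mem_setOf_eq, Set.mem_inter_iff]
      rw [hSeq]
      exact h1.inter (h2.inter h3)
    have hScompact : IsCompact S := by
      apply (isCompact_Icc.prod isCompact_Icc).of_isClosed_subset hSclosed
      intro q hq
      exact ⟨hq.1, hq.2.1⟩
    have hT2compact : IsCompact ((fun q : ℝ × ℝ => q.2) '' S) :=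
      hScompact.image continuous_snd
    have hT2ne : ((fun q : ℝ × ℝ => q.2) '' S).Nonempty := hSne.image _
    set t₀ : ℝ := sInf ((fun q : ℝ × ℝ => q.2) '' S) with ht₀
    have ht₀mem : t₀ ∈ (fun q : ℝ × ℝ => q.2) '' S := hT2compact.sInf_mem hT2ne
    obtain ⟨q₀, hq₀S, hq₀2⟩ := ht₀mem
    have ht₀Icc : t₀ ∈ Set.Icc (0:ℝ) T := hq₀2 ▸ hq₀S.2.1
    have ht₀pos : 0 < t₀ := by
      rcases lt_or_eq_of_le ht₀Icc.1 with h | h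
      · exact h
      · exfalso
        have h1 := hq₀S.2.2
        have hq2 : q₀.2 = t₀ := hq₀2
        have hq20 : q₀.2 = 0 := by rw [hq2, ← h]
        have h2 : D (q₀.1, q₀.2) = 0 := by
          rw [hq20]
          exact hD0 q₀.1 hq₀S.1
        have h3 : D q₀ = 0 := by rw [← h2]
        rw [h3, hq20] at h1
        rw [Real.exp_zero] at h1
        have := Real.exp_pos q₀.2
        nlinarith
    have hbefore : ∀ p ∈ Set.Icc (0:ℝ) 1, ∀ τ, 0 ≤ τ → τ < t₀ →
        0 < D (p, τ) + ε * Real.exp τ := by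
      intro p hp τ h0 hlt
      by_contra h
      push_neg at h
      have hmem : (p, τ) ∈ S := ⟨hp, ⟨h0, by linarith [ht₀Icc.2]⟩, h⟩
      have : τ ∈ (fun q : ℝ × ℝ => q.2) '' S := ⟨(p, τ), hmem, rfl⟩
      have := csInf_le hT2compact.bddBelow this
      linarith
    obtain ⟨x₀, hx₀, hmin⟩ := isCompact_Icc.exists_isMinOn (⟨0, by norm_num⟩ :
      (Set.Icc (0:ℝ) 1).Nonempty) ((hDcont.comp (by fun_prop :
        Continuous (fun p : ℝ => (p, t₀)))).continuousOn)
    have hub : D (x₀, t₀) ≤ -(ε * Real.exp t₀) := by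
      have h1 : D (x₀, t₀) ≤ D (q₀.1, t₀) := hmin hq₀S.1
      have h2 : D (q₀.1, t₀) + ε * Real.exp t₀ ≤ 0 := by
        have := hq₀S.2.2
        rw [← hq₀2]
        convert this using 3 <;> rw [hq₀2]
      linarith
    have hlb : -(ε * Real.exp t₀) ≤ D (x₀, t₀) := by
      have hne : (𝓝[Set.Ioo (0:ℝ) t₀] t₀).NeBot := by
        rw [← mem_closure_iff_nhdsWithin_neBot, closure_Ioo (ne_of_lt ht₀pos)]
        exact ⟨le_of_lt ht₀pos, le_refl _⟩
      have hcont : Tendsto (fun τ => D (x₀, τ) + ε * Real.exp τ) (𝓝[Set.Ioo (0:ℝ) t₀] t₀)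
          (𝓝 (D (x₀, t₀) + ε * Real.exp t₀)) := by
        apply ContinuousAt.continuousWithinAt
        exact ((hDcont.comp (by fun_prop : Continuous (fun τ : ℝ => ((x₀ : ℝ), τ)))).add
          (continuous_const.mul Real.continuous_exp)).continuousAt
      have hev : ∀ᶠ τ in 𝓝[Set.Ioo (0:ℝ) t₀] t₀, 0 ≤ D (x₀, τ) + ε * Real.exp τ := by
        filter_upwards [self_mem_nhdsWithin] with τ hτ
        exact le_of_lt (hbefore x₀ hx₀ τ (le_of_lt hτ.1) hτ.2)
      have := ge_of_tendsto hcont hev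
      linarith
    have heq : D (x₀, t₀) = -(ε * Real.exp t₀) := le_antisymm hub hlb
    -- t-derivative inequality at (x₀, t₀)
    have hDt_le : pd2 (pd2 U) (x₀, t₀) + a * pd2 U (x₀, t₀)
        + 2 * s * (1 - U (x₀, t₀)) * pd2 U (x₀, t₀) ≤ -(ε * Real.exp t₀) := by
      set h : ℝ → ℝ := fun τ => D (x₀, τ) + ε * Real.exp τ with hh
      have hderiv : HasDerivAt h (pd2 (pd2 U) (x₀, t₀) + a * pd2 U (x₀, t₀)
          + 2 * s * (1 - U (x₀, t₀)) * pd2 U (x₀, t₀) + ε * Real.exp t₀) t₀ :=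
        (hD_t x₀ t₀).add ((Real.hasDerivAt_exp t₀).const_mul ε)
      have hslope := hasDerivAt_iff_tendsto_slope.mp hderiv
      have hne : (𝓝[Set.Ioo (0:ℝ) t₀] t₀).NeBot := by
        rw [← mem_closure_iff_nhdsWithin_neBot, closure_Ioo (ne_of_lt ht₀pos)]
        exact ⟨le_of_lt ht₀pos, le_refl _⟩
      have hmono : 𝓝[Set.Ioo (0:ℝ) t₀] t₀ ≤ 𝓝[≠] t₀ := by
        apply nhdsWithin_mono
        intro τ hτ
        exact ne_of_lt hτ.2
      have hslope' := hslope.mono_left hmono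
      have hev : ∀ᶠ τ in 𝓝[Set.Ioo (0:ℝ) t₀] t₀, slope h t₀ τ ≤ 0 := by
        filter_upwards [self_mem_nhdsWithin] with τ hτ
        have h1 : 0 ≤ h τ := le_of_lt (hbefore x₀ hx₀ τ (le_of_lt hτ.1) hτ.2)
        have h2 : h t₀ = 0 := by simp only [hh]; linarith [heq]
        rw [slope_def_field]
        rw [div_nonpos_iff]
        left
        constructor
        · rw [h2]; linarith
        · linarith [hτ.2]
      have := le_of_tendsto hslope' hev
      linarith
    -- x-derivative term vanishes
    have hXterm : c x₀ * (pd1 (pd2 U) (x₀, t₀) + a * pd1 U (x₀, t₀)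
        + 2 * s * (1 - U (x₀, t₀)) * pd1 U (x₀, t₀)) = 0 := by
      rcases eq_or_lt_of_le hx₀.1 with h0 | h0
      · have : c x₀ = 0 := by simp only [hc, ← h0]; ring
        rw [this]; ring
      rcases eq_or_lt_of_le hx₀.2 with h1 | h1
      swap
      · -- interior point
        have hloc : IsLocalMin (fun p => D (p, t₀)) x₀ :=
          hmin.isLocalMin (Icc_mem_nhds h0 h1)
        have := hloc.deriv_eq_zero
        rw [(hD_x x₀ t₀).deriv] at this
        rw [this]; ring
      · have : c x₀ = 0 := by simp only [hc, h1]; ring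
        rw [this]; ring
    -- contradiction via the PDE for D
    have hpdeD := hD_pde x₀ hx₀ t₀ ht₀pos
    have hyD : D (x₀, t₀) ≤ D (Y x₀, t₀) := hmin (hYIcc x₀ hx₀)
    have hl0f0 : 0 ≤ l0 * f0 := mul_nonneg hl0 (le_of_lt hf0)
    have hterm1 : 0 ≤ l0 * f0 * (D (Y x₀, t₀) - D (x₀, t₀)) :=
      mul_nonneg hl0f0 (by linarith)
    have hterm2 : 0 ≤ s * (l0 * f0) * (U (Y x₀, t₀) - U (x₀, t₀))^2 :=
      mul_nonneg (mul_nonneg (le_of_lt hspos) hl0f0) (sq_nonneg _)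
    have hexp := Real.exp_pos t₀
    nlinarith [hpdeD, hXterm, hDt_le, hterm1, hterm2]
  -- conclude nonnegativity of D
  have hDnn : ∀ x ∈ Set.Icc (0:ℝ) 1, ∀ t ≥ (0:ℝ), 0 ≤ D (x, t) := by
    intro x hx t ht
    rcases eq_or_lt_of_le ht with h0 | h0
    · rw [← h0]; rw [(hD0 x hx)]
    by_contra h
    push_neg at h
    have hexp := Real.exp_pos t
    set ε : ℝ := -D (x, t) / (2 * Real.exp t) with hε
    have hεpos : 0 < ε := by
      apply div_pos (by linarith) (by linarith)
    have := main t h0 ε hεpos x hx t ⟨ht, le_refl t⟩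
    have hεexp : ε * Real.exp t = -D (x, t) / 2 := by
      rw [hε]; field_simp
    rw [hεexp] at this
    nlinarith [this, h]
  -- final conclusion
  intro x hx t ht
  have := hDnn x hx t ht
  simp only [hD, hUxt] at this
  linarith [this]

-- Riccati comparison along time, for fixed x
lemma keyBound (s aa : ℝ) (u : ℝ → ℝ → ℝ) (x : ℝ) (I : ℝ → ℝ)
    (hspos : 0 < s) (haa : 0 ≤ aa)
    (hx : x ∈ Set.Icc (0:ℝ) 1)
    (hu_smooth : ContDiff ℝ (⊤ : ℕ∞) (Function.uncurry u))
    (hu_init : u x 0 = x)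
    (hu_ub : ∀ t ≥ (0:ℝ), u x t ≤ 1)
    (hkey : ∀ t ≥ (0:ℝ),
      s * (1 - u x t)^2 + aa * (1 - u x t) ≤ pd2 (Function.uncurry u) (x, t))
    (hI0 : I 0 = 0)
    (hI' : ∀ τ : ℝ, HasDerivAt I (s * Real.exp (-(aa * τ))) τ)
    (hInn : ∀ τ ≥ (0:ℝ), 0 ≤ I τ) :
    ∀ t ≥ (0:ℝ), (1 - u x t) * Real.exp (aa * t) * (1 + (1 - x) * I t) ≤ 1 - x := by
  set U : ℝ × ℝ → ℝ := Function.uncurry u with hUdef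
  have hUxt : ∀ x' t : ℝ, U (x', t) = u x' t := fun _ _ => rfl
  set g : ℝ → ℝ := fun τ => Real.exp (aa * τ) * (1 - u x τ) with hg
  have hgderiv : ∀ τ : ℝ, HasDerivAt g
      (aa * Real.exp (aa * τ) * (1 - u x τ) - Real.exp (aa * τ) * pd2 U (x, τ)) τ := by
    intro τ
    have he : HasDerivAt (fun τ' => Real.exp (aa * τ')) (Real.exp (aa * τ) * aa) τ := by
      simpa using ((hasDerivAt_id τ).const_mul aa).exp
    have hu : HasDerivAt (fun τ' => u x τ') (pd2 U (x, τ)) τ := hasDerivAt_pd2 hu_smooth x τ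
    have := he.mul (hu.const_sub 1)
    refine this.congr_deriv ?_
    ring
  have hgcont : Continuous g :=
    continuous_iff_continuousAt.mpr (fun τ => (hgderiv τ).continuousAt)
  have hg0 : g 0 = 1 - x := by simp [hg, hu_init]
  have hgnn : ∀ τ ≥ (0:ℝ), 0 ≤ g τ := by
    intro τ hτ
    exact mul_nonneg (Real.exp_pos _).le (by linarith [hu_ub τ hτ])
  have hgder_le : ∀ τ ≥ (0:ℝ), aa * Real.exp (aa * τ) * (1 - u x τ)
      - Real.exp (aa * τ) * pd2 U (x, τ) ≤ -(s * Real.exp (-(aa * τ)) * (g τ)^2) := by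
    intro τ hτ
    have hk := hkey τ hτ
    have hexp := Real.exp_pos (aa * τ)
    have hrw : s * Real.exp (-(aa * τ)) * (g τ)^2
        = s * Real.exp (aa * τ) * (1 - u x τ)^2 := by
      simp only [hg]
      rw [Real.exp_neg]
      field_simp
    rw [hrw]
    have := mul_le_mul_of_nonneg_left hk (le_of_lt hexp)
    nlinarith [this]
  intro t ht
  rcases eq_or_lt_of_le ht with h0 | h0
  · rw [← h0]
    simp [hu_init, hI0]
  -- t > 0
  have hganti : AntitoneOn g (Set.Icc 0 t) := by
    apply antitoneOn_of_deriv_nonpos (convex_Icc 0 t) (hgcont.continuousOn)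
    · intro τ hτ
      exact (hgderiv τ).differentiableAt.differentiableWithinAt
    · intro τ hτ
      rw [interior_Icc] at hτ
      rw [(hgderiv τ).deriv]
      have h1 := hgder_le τ (le_of_lt hτ.1)
      have h2 : 0 ≤ s * Real.exp (-(aa * τ)) * (g τ)^2 :=
        mul_nonneg (mul_nonneg hspos.le (Real.exp_pos _).le) (sq_nonneg _)
      linarith
  rcases le_or_gt (g t) 0 with hgt | hgt
  · -- g t = 0
    have hgt0 : g t = 0 := le_antisymm hgt (hgnn t ht)
    have hlhs : (1 - u x t) * Real.exp (aa * t) * (1 + (1 - x) * I t) = g t * (1 + (1 - x) * I t) := by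
      simp only [hg]; ring
    rw [hlhs, hgt0, zero_mul]
    linarith [hx.2]
  · -- g t > 0
    have hgpos : ∀ τ ∈ Set.Icc (0:ℝ) t, 0 < g τ := by
      intro τ hτ
      exact lt_of_lt_of_le hgt (hganti hτ ⟨le_trans hτ.1 hτ.2, le_refl t⟩ hτ.2)
    set F : ℝ → ℝ := fun τ => (g τ)⁻¹ - I τ with hF
    have hFmono : MonotoneOn F (Set.Icc 0 t) := by
      apply monotoneOn_of_deriv_nonneg (convex_Icc 0 t)
      · apply ContinuousOn.sub
        · exact ContinuousOn.inv₀ hgcont.continuousOn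
            (fun τ hτ => ne_of_gt (hgpos τ hτ))
        · exact (Continuous.continuousOn
            (continuous_iff_continuousAt.mpr (fun τ => (hI' τ).continuousAt)))
      · intro τ hτ
        rw [interior_Icc] at hτ
        have hgne : g τ ≠ 0 := ne_of_gt (hgpos τ ⟨hτ.1.le, hτ.2.le⟩)
        exact (((hgderiv τ).inv hgne).sub (hI' τ)).differentiableAt.differentiableWithinAt
      · intro τ hτ
        rw [interior_Icc] at hτ
        have hgposτ : 0 < g τ := hgpos τ ⟨hτ.1.le, hτ.2.le⟩
        have hgne : g τ ≠ 0 := ne_of_gt hgposτ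
        have hder := ((hgderiv τ).inv hgne).sub (hI' τ)
        rw [show deriv F τ = _ from hder.deriv]
        have h1 := hgder_le τ hτ.1.le
        have hsq : 0 < (g τ)^2 := by positivity
        rw [le_sub_iff_add_le, zero_add, le_div_iff₀ hsq] at *
        · nlinarith [h1, hsq]
    have hF0t := hFmono (Set.left_mem_Icc.mpr ht) (Set.right_mem_Icc.mpr ht) ht
    -- F 0 ≤ F t : (1-x)⁻¹ - 0 ≤ (g t)⁻¹ - I t
    have hzpos : 0 < 1 - x := by
      have := hgpos 0 (Set.left_mem_Icc.mpr ht)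
      rw [hg0] at this
      exact this
    simp only [hF, hg0, hI0, sub_zero] at hF0t
    have hlhs : (1 - u x t) * Real.exp (aa * t) * (1 + (1 - x) * I t)
        = g t * (1 + (1 - x) * I t) := by
      simp only [hg]; ring
    rw [hlhs]
    have hIt : 0 ≤ I t := hInn t ht
    have h2 : (1 - x)⁻¹ + I t ≤ (g t)⁻¹ := by linarith
    have h3 := mul_le_mul_of_nonneg_left h2 (le_of_lt (mul_pos hzpos hgt))
    have h5 : g t + (1 - x) * g t * I t ≤ 1 - x := by
      have e1 : (1 - x) * g t * ((1 - x)⁻¹ + I t) = g t + (1 - x) * g t * I t := by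
        field_simp
      have e2 : (1 - x) * g t * (g t)⁻¹ = 1 - x := by
        field_simp
      rw [e1, e2] at h3
      exact h3
    have h6 : g t * (1 + (1 - x) * I t) = g t + (1 - x) * g t * I t := by ring
    rw [h6]
    exact h5

/-- Unfair mutation, strong case: if `m₁ = 0` and `m₀f₀ ≥ s`,
the solution of (K1) dominates the quasispecies solution and tends to 1. -/
theorem stmt_12 (f0 f1 g0 g1 l0 l1 s m0 m1 : ℝ) (u : ℝ → ℝ → ℝ)
    (hf : f1 < f0) (hf1 : 0 ≤ f1) (hs : s = f0 - f1)
    (hg0 : g0 ∈ Set.Ioc (0:ℝ) 1) (hg1 : g1 ∈ Set.Ioc (0:ℝ) 1)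
    (hl0 : 0 ≤ l0) (hl1 : l1 = 0)
    (hm0 : m0 = l0 * g0) (hm1 : m1 = l1 * g1)
    (hstrong : s ≤ m0 * f0)
    (hu_smooth : ContDiff ℝ (⊤ : ℕ∞) (Function.uncurry u))
    (hu_pde : ∀ x ∈ Set.Icc (0:ℝ) 1, ∀ t > (0:ℝ),
      deriv (fun τ => u x τ) t + s * (1 - x) * x * deriv (fun y => u y t) x
        = l0 * f0 * (u (x + g0 * (1 - x)) t - u x t)
          + l1 * f1 * (u (x - g1 * x) t - u x t))
    (hu_init : ∀ x ∈ Set.Icc (0:ℝ) 1, u x 0 = x)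
    (hu_ub : ∀ x ∈ Set.Icc (0:ℝ) 1, ∀ t ≥ (0:ℝ), u x t ≤ 1) :
    (s < m0 * f0 → ∀ x ∈ Set.Icc (0:ℝ) 1, ∀ t ≥ (0:ℝ),
      1 - (1 - x) / (1 + (s * (1 - x) / (m0 * f0 - s))
        * (Real.exp ((m0 * f0 - s) * t) - 1)) ≤ u x t ∧ u x t ≤ 1) ∧
    (m0 * f0 = s → ∀ x ∈ Set.Icc (0:ℝ) 1, ∀ t ≥ (0:ℝ),
      1 - (1 - x) / (1 + s * (1 - x) * t) ≤ u x t ∧ u x t ≤ 1) ∧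
    (∀ x ∈ Set.Icc (0:ℝ) 1, Tendsto (fun t => u x t) atTop (nhds 1)) := by
  have hspos : 0 < s := by rw [hs]; linarith
  have hf0 : 0 < f0 := lt_of_le_of_lt hf1 hf
  set U : ℝ × ℝ → ℝ := Function.uncurry u with hUdef
  -- restated PDE
  have pde : ∀ x ∈ Set.Icc (0:ℝ) 1, ∀ t > (0:ℝ),
      pd2 U (x, t) + s * (1 - x) * x * pd1 U (x, t)
        = l0 * f0 * (u (x + g0 * (1 - x)) t - u x t) := by
    intro x hx t ht
    have h := hu_pde x hx t ht
    rw [hl1] at h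
    have h1 : deriv (fun τ => u x τ) t = pd2 U (x, t) :=
      (hasDerivAt_pd2 hu_smooth x t).deriv
    have h2 : deriv (fun y => u y t) x = pd1 U (x, t) :=
      (hasDerivAt_pd1 hu_smooth x t).deriv
    rw [h1, h2] at h
    simpa using h
  have hkeyD := keyD f0 g0 l0 s m0 u hspos hf0 hg0 hl0 hm0 hu_smooth pde hu_init
  set aa : ℝ := m0 * f0 - s with haa
  have haann : 0 ≤ aa := by rw [haa]; linarith
  -- strict case bound
  have strictBound : s < m0 * f0 → ∀ x ∈ Set.Icc (0:ℝ) 1, ∀ t ≥ (0:ℝ),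
      1 - (1 - x) / (1 + (s * (1 - x) / (m0 * f0 - s))
        * (Real.exp ((m0 * f0 - s) * t) - 1)) ≤ u x t := by
    intro hlt x hx t ht
    have hapos : 0 < aa := by rw [haa]; linarith
    set I : ℝ → ℝ := fun τ => (s / aa) * (1 - Real.exp (-(aa * τ))) with hI
    have hI0 : I 0 = 0 := by simp [hI]
    have hI' : ∀ τ : ℝ, HasDerivAt I (s * Real.exp (-(aa * τ))) τ := by
      intro τ
      have h1 : HasDerivAt (fun τ' => -(aa * τ')) (-aa) τ := by
        exact (((hasDerivAt_id τ).const_mul aa).neg).congr_deriv (by simp)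
      have h2 := h1.exp
      have h3 := (h2.const_sub 1).const_mul (s / aa)
      refine h3.congr_deriv ?_
      field_simp
    have hInn : ∀ τ ≥ (0:ℝ), 0 ≤ I τ := by
      intro τ hτ
      have : Real.exp (-(aa * τ)) ≤ 1 := Real.exp_le_one_iff.mpr (by nlinarith)
      have h1 : 0 ≤ s / aa := le_of_lt (div_pos hspos hapos)
      have h2 : 0 ≤ 1 - Real.exp (-(aa * τ)) := by linarith
      exact mul_nonneg h1 h2
    have hb := keyBound s aa u x I hspos haann hx hu_smooth (hu_init x hx)
      (hu_ub x hx) (fun t' ht' => hkeyD x hx t' ht') hI0 hI' hInn t ht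
    -- algebra
    have hexp1 : 1 ≤ Real.exp (aa * t) := Real.one_le_exp_iff.mpr (by positivity)
    have hEI : Real.exp (aa * t) * (1 + (1 - x) * I t)
        = Real.exp (aa * t) + (s * (1 - x) / aa) * (Real.exp (aa * t) - 1) := by
      simp only [hI]
      rw [Real.exp_neg]
      have := Real.exp_pos (aa * t)
      field_simp
    set Q : ℝ := 1 + (s * (1 - x) / aa) * (Real.exp (aa * t) - 1) with hQ
    have hQpos : 0 < Q := by
      have h1 : 0 ≤ s * (1 - x) / aa := by
        apply div_nonneg (mul_nonneg hspos.le (by linarith [hx.2])) hapos.le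
      have h2 : 0 ≤ Real.exp (aa * t) - 1 := by linarith
      rw [hQ]
      nlinarith [mul_nonneg h1 h2]
    have hvQ : (1 - u x t) * Q ≤ 1 - x := by
      have hv : 0 ≤ 1 - u x t := by linarith [hu_ub x hx t ht]
      have h1 : (1 - u x t) * Q ≤ (1 - u x t) * (Real.exp (aa * t) * (1 + (1 - x) * I t)) := by
        rw [hEI]
        apply mul_le_mul_of_nonneg_left _ hv
        rw [hQ]
        linarith
      calc (1 - u x t) * Q ≤ (1 - u x t) * (Real.exp (aa * t) * (1 + (1 - x) * I t)) := h1
        _ = (1 - u x t) * Real.exp (aa * t) * (1 + (1 - x) * I t) := by ring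
        _ ≤ 1 - x := hb
    rw [sub_le_comm]
    rw [div_eq_mul_inv] -- maybe not needed
    rw [← div_eq_mul_inv]
    rw [le_div_iff₀ hQpos] at *
    · exact hvQ
  -- equal case bound
  have eqBound : m0 * f0 = s → ∀ x ∈ Set.Icc (0:ℝ) 1, ∀ t ≥ (0:ℝ),
      1 - (1 - x) / (1 + s * (1 - x) * t) ≤ u x t := by
    intro heq x hx t ht
    have ha0 : aa = 0 := by rw [haa, heq]; ring
    set I : ℝ → ℝ := fun τ => s * τ with hI
    have hI0 : I 0 = 0 := by simp [hI]
    have hI' : ∀ τ : ℝ, HasDerivAt I (s * Real.exp (-(aa * τ))) τ := by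
      intro τ
      rw [ha0]
      simp only [neg_mul, zero_mul, neg_zero, Real.exp_zero, mul_one]
      simpa using (hasDerivAt_id τ).const_mul s
    have hInn : ∀ τ ≥ (0:ℝ), 0 ≤ I τ := fun τ hτ => mul_nonneg hspos.le hτ
    have hb := keyBound s aa u x I hspos haann hx hu_smooth (hu_init x hx)
      (hu_ub x hx) (fun t' ht' => hkeyD x hx t' ht') hI0 hI' hInn t ht
    rw [ha0] at hb
    simp only [zero_mul, Real.exp_zero, mul_one, hI] at hb
    have hQpos : 0 < 1 + s * (1 - x) * t := by
      have : 0 ≤ s * (1 - x) * t := by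
        apply mul_nonneg (mul_nonneg hspos.le (by linarith [hx.2])) ht
      linarith
    rw [sub_le_comm, le_div_iff₀ hQpos]
    calc (1 - u x t) * (1 + s * (1 - x) * t)
        = (1 - u x t) * (1 + (1 - x) * (s * t)) := by ring
      _ ≤ 1 - x := hb
  -- assemble
  refine ⟨fun hlt x hx t ht => ⟨strictBound hlt x hx t ht, hu_ub x hx t ht⟩,
    fun heq x hx t ht => ⟨eqBound heq x hx t ht, hu_ub x hx t ht⟩, ?_⟩
  -- tendsto
  intro x hx
  have hub' : ∀ᶠ t in atTop, u x t ≤ 1 := by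
    filter_upwards [eventually_ge_atTop (0:ℝ)] with t ht
    exact hu_ub x hx t ht
  rcases eq_or_lt_of_le hstrong with heq | hlt
  · -- aa = 0 case
    have hL : Tendsto (fun t => 1 - (1 - x) / (1 + s * (1 - x) * t)) atTop (𝓝 1) := by
      rcases eq_or_lt_of_le hx.2 with hx1 | hx1
      · have : (1:ℝ) - x = 0 := by rw [hx1]; ring
        simp only [this, zero_div, mul_zero, zero_mul]
        simpa using tendsto_const_nhds
      · have hzpos : 0 < 1 - x := by linarith
        have hdenom : Tendsto (fun t : ℝ => 1 + s * (1 - x) * t) atTop atTop := by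
          apply tendsto_atTop_add_const_left
          exact (tendsto_id.const_mul_atTop (mul_pos hspos hzpos))
        have : Tendsto (fun t : ℝ => (1 - x) / (1 + s * (1 - x) * t)) atTop (𝓝 0) :=
          Tendsto.div_atTop tendsto_const_nhds hdenom
        have h2 := (tendsto_const_nhds (x := (1:ℝ)) (f := atTop)).sub this
        simpa using h2
    have hlow : ∀ᶠ t in atTop, 1 - (1 - x) / (1 + s * (1 - x) * t) ≤ u x t := by
      filter_upwards [eventually_ge_atTop (0:ℝ)] with t ht
      exact eqBound heq.symm x hx t ht
    exact tendsto_of_tendsto_of_tendsto_of_le_of_le' hL tendsto_const_nhds hlow hub'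
  · -- aa > 0 case
    have hapos : 0 < aa := by rw [haa]; linarith
    have hL : Tendsto (fun t => 1 - (1 - x) / (1 + (s * (1 - x) / (m0 * f0 - s))
        * (Real.exp ((m0 * f0 - s) * t) - 1))) atTop (𝓝 1) := by
      rcases eq_or_lt_of_le hx.2 with hx1 | hx1
      · have hz : (1:ℝ) - x = 0 := by rw [hx1]; ring
        simp only [hz, zero_div, mul_zero, zero_mul]
        simpa using tendsto_const_nhds
      · have hzpos : 0 < 1 - x := by linarith
        have hCpos : 0 < s * (1 - x) / (m0 * f0 - s) := by
          apply div_pos (mul_pos hspos hzpos) (by linarith)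
        have hexp : Tendsto (fun t : ℝ => Real.exp ((m0 * f0 - s) * t)) atTop atTop := by
          apply Real.tendsto_exp_atTop.comp
          exact tendsto_id.const_mul_atTop (by linarith)
        have hdenom : Tendsto (fun t : ℝ => 1 + (s * (1 - x) / (m0 * f0 - s))
            * (Real.exp ((m0 * f0 - s) * t) - 1)) atTop atTop := by
          apply tendsto_atTop_add_const_left
          apply Tendsto.const_mul_atTop hCpos
          exact tendsto_atTop_add_const_right atTop (-1) hexp
        have : Tendsto (fun t : ℝ => (1 - x) / (1 + (s * (1 - x) / (m0 * f0 - s))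
            * (Real.exp ((m0 * f0 - s) * t) - 1))) atTop (𝓝 0) :=
          Tendsto.div_atTop tendsto_const_nhds hdenom
        have h2 := (tendsto_const_nhds (x := (1:ℝ)) (f := atTop)).sub this
        simpa using h2
    have hlow : ∀ᶠ t in atTop, 1 - (1 - x) / (1 + (s * (1 - x) / (m0 * f0 - s))
        * (Real.exp ((m0 * f0 - s) * t) - 1)) ≤ u x t := by
      filter_upwards [eventually_ge_atTop (0:ℝ)] with t ht
      exact strictBound hlt x hx t ht
    exact tendsto_of_tendsto_of_tendsto_of_le_of_le' hL tendsto_const_nhds hlow hub'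
end

section
/- Fix reals s, m, f with f > 0 and s > m f > 0, and define Z(x,t) = 1 − (1−x) e^{(s−mf)t} / (1 + (1−x)(e^{st} − 1)) for x ∈ [0,1], t ≥ 0. Then Z(x,0) = x for all x ∈ [0,1], Z is smooth, Z satisfies the equation (Kγ=1): ∂ₜZ(x,t) + s x(1−x) ∂ₓZ(x,t) = m f [Z(1,t) − Z(x,t)] for all x ∈ [0,1], t > 0, and Z(x,t) → 1 as t → ∞ for every x ∈ [0,1]. -/
open Set Filter Topology

noncomputable def Zfun (s m f : ℝ) (x t : ℝ) : ℝ :=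
  1 - (1 - x) * Real.exp ((s - m * f) * t) / (1 + (1 - x) * (Real.exp (s * t) - 1))

/-- `Z` solves (Kγ=1):
`∂ₜZ + s x(1-x)∂ₓZ = m f [Z(1,t) - Z(x,t)]` with `Z(x,0) = x`, it is smooth,
and `Z(x,t) → 1` as `t → ∞`. -/
theorem stmt_13 (s m f : ℝ) (hf : 0 < f) (hmf : 0 < m * f) (hs : m * f < s) :
    (∀ x ∈ Set.Icc (0:ℝ) 1, Zfun s m f x 0 = x) ∧
    ContDiffOn ℝ (⊤ : ℕ∞) (fun p : ℝ × ℝ => Zfun s m f p.1 p.2)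
      (Set.Icc (0:ℝ) 1 ×ˢ Set.Ici (0:ℝ)) ∧
    (∀ x ∈ Set.Icc (0:ℝ) 1, ∀ t > (0:ℝ),
      deriv (fun τ => Zfun s m f x τ) t
        + s * x * (1 - x) * deriv (fun y => Zfun s m f y t) x
        = m * f * (Zfun s m f 1 t - Zfun s m f x t)) ∧
    (∀ x ∈ Set.Icc (0:ℝ) 1, Tendsto (fun t => Zfun s m f x t) atTop (nhds 1)) := by
  have hspos : 0 < s := lt_trans hmf hs
  have hDpos : ∀ x ∈ Set.Icc (0:ℝ) 1, ∀ t : ℝ, 0 ≤ t →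
      0 < 1 + (1 - x) * (Real.exp (s * t) - 1) := by
    intro x hx t ht
    have h1 : (0:ℝ) ≤ 1 - x := by linarith [hx.2]
    have h2 : (1:ℝ) ≤ Real.exp (s * t) := by
      rw [Real.one_le_exp_iff]; positivity
    nlinarith
  refine ⟨?_, ?_, ?_, ?_⟩
  · intro x hx
    simp [Zfun]
  · apply ContDiffOn.sub contDiffOn_const
    apply ContDiffOn.div
    · exact ((contDiff_const.sub contDiff_fst).mul
        ((contDiff_const.mul contDiff_snd).exp)).contDiffOn
    · exact (contDiff_const.add ((contDiff_const.sub contDiff_fst).mul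
        (((contDiff_const.mul contDiff_snd).exp).sub contDiff_const))).contDiffOn
    · rintro ⟨x, t⟩ ⟨hx, ht⟩
      exact (hDpos x hx t ht).ne'
  · intro x hx t ht
    have hD := hDpos x hx t ht.le
    set E1 := Real.exp ((s - m * f) * t) with hE1
    set Es := Real.exp (s * t) with hEs
    set D := 1 + (1 - x) * (Es - 1) with hDdef
    have hDne : D ≠ 0 := hD.ne'
    -- t-derivative
    have hnum_t : HasDerivAt (fun τ => (1 - x) * Real.exp ((s - m * f) * τ))
        ((1 - x) * (Real.exp ((s - m * f) * t) * ((s - m * f) * 1))) t :=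
      (((hasDerivAt_id t).const_mul (s - m * f)).exp).const_mul (1 - x)
    have hden_t : HasDerivAt (fun τ => 1 + (1 - x) * (Real.exp (s * τ) - 1))
        ((1 - x) * (Real.exp (s * t) * (s * 1))) t :=
      (((((hasDerivAt_id t).const_mul s).exp).sub_const 1).const_mul (1 - x)).const_add 1
    have hZt : HasDerivAt (fun τ => Zfun s m f x τ)
        (0 - (((1 - x) * (E1 * ((s - m * f) * 1))) * D
          - ((1 - x) * E1) * ((1 - x) * (Es * (s * 1)))) / D ^ 2) t := by
      exact (hasDerivAt_const t 1).sub (hnum_t.div hden_t hDne)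
    -- x-derivative
    have hnum_x : HasDerivAt (fun y => (1 - y) * E1) ((-1) * E1) x :=
      ((hasDerivAt_id x).const_sub 1).mul_const E1
    have hden_x : HasDerivAt (fun y => 1 + (1 - y) * (Es - 1)) ((-1) * (Es - 1)) x :=
      (((hasDerivAt_id x).const_sub 1).mul_const (Es - 1)).const_add 1
    have hZx : HasDerivAt (fun y => Zfun s m f y t)
        (0 - (((-1) * E1) * D - ((1 - x) * E1) * ((-1) * (Es - 1))) / D ^ 2) x := by
      exact (hasDerivAt_const x 1).sub (hnum_x.div hden_x hDne)
    rw [hZt.deriv, hZx.deriv]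
    simp only [Zfun, ← hE1, ← hEs, ← hDdef]
    have h11 : (1:ℝ) - (1 - 1) * E1 / (1 + (1 - 1) * (Es - 1)) = 1 := by norm_num
    rw [h11]
    field_simp
    ring
  · intro x hx
    have h1x : (0:ℝ) ≤ 1 - x := by linarith [hx.2]
    have key : Tendsto (fun t => (1 - x) * Real.exp ((s - m * f) * t)
        / (1 + (1 - x) * (Real.exp (s * t) - 1))) atTop (nhds 0) := by
      apply squeeze_zero' (g := fun t => Real.exp (-(m * f) * t))
      · filter_upwards [eventually_ge_atTop (0:ℝ)] with t ht
        have := hDpos x hx t ht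
        positivity
      · filter_upwards [eventually_ge_atTop (0:ℝ)] with t ht
        have hD := hDpos x hx t ht
        rw [div_le_iff₀ hD]
        have hexp : Real.exp (-(m * f) * t) * Real.exp (s * t)
            = Real.exp ((s - m * f) * t) := by
          rw [← Real.exp_add]; ring_nf
        have h2 : (0:ℝ) < Real.exp (-(m * f) * t) := Real.exp_pos _
        nlinarith [Real.exp_pos ((s - m * f) * t), hx.1, hx.2]
      · exact Real.tendsto_exp_atBot.comp
          ((tendsto_const_mul_atBot_of_neg (f := fun t : ℝ => t)
            (by linarith : -(m * f) < 0)).mpr tendsto_id)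
    have := tendsto_const_nhds (x := (1:ℝ)) (f := atTop (α := ℝ)) |>.sub key
    simpa [Zfun] using this
end

section
/- Fix reals s, m, f with f > 0 and s > m f > 0. If u : [0,1]×[0,∞) → ℝ is a C¹ function satisfying ∂ₜu(x,t) + s x(1−x) ∂ₓu(x,t) = m f [u(1,t) − u(x,t)] for all x ∈ [0,1], t > 0, with u(x,0) = x, then u(x,t) = Z(x,t) := 1 − (1−x) e^{(s−mf)t}/(1 + (1−x)(e^{st} − 1)) for all x ∈ [0,1] and t ≥ 0; i.e., Z is the only solution with initial datum x. -/
/-!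
Along a characteristic `τ ↦ φ τ` of the transport term, i.e. a solution of the logistic equation
`φ' = s φ (1 - φ)`, which stays in `[0,1]`, the equation says that `g τ = u (φ τ) τ` solves the
linear ODE `g' = m f (u(1,τ) - g)`. At `x = 1` the transport term vanishes, so `u(1,·) ≡ 1`, and
`g - 1` decays like `e^{-m f τ}`. Following the characteristic through `(x,t)` back to time `0`,
where `u(y,0) = y`, gives the closed form.
-/

open Set Real Function

lemma eq_of_hasDerivAt_zero_Ioi {g : ℝ → ℝ} {a : ℝ} (hc : ContinuousOn g (Ici a))
    (hd : ∀ t > a, HasDerivAt g 0 t) {t : ℝ} (ht : a ≤ t) : g t = g a := by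
  rcases ht.eq_or_lt with rfl | ht
  · rfl
  obtain ⟨c, -, hc⟩ := exists_hasDerivAt_eq_slope g (fun _ => 0) ht (hc.mono Icc_subset_Ici_self)
    fun τ hτ => hd τ hτ.1
  rw [eq_comm, div_eq_zero_iff, sub_eq_zero, sub_eq_zero] at hc
  exact hc.resolve_right ht.ne'

lemma eq_add_mul_exp_of_hasDerivAt {g : ℝ → ℝ} {b c : ℝ} (hc : ContinuousOn g (Ici 0))
    (hd : ∀ t > 0, HasDerivAt g (c * (b - g t)) t) {t : ℝ} (ht : 0 ≤ t) :
    g t = b + (g 0 - b) * exp (-(c * t)) := by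
  have hw : ∀ τ > 0, HasDerivAt (fun τ => (g τ - b) * exp (c * τ)) 0 τ := by
    intro τ hτ
    have hexp : HasDerivAt (fun τ => exp (c * τ)) (exp (c * τ) * c) τ :=
      ((hasDerivAt_id τ).const_mul c).exp.congr_deriv (by simp)
    exact (((hd τ hτ).sub_const b).mul hexp).congr_deriv (by ring)
  have hwc : ContinuousOn (fun τ => (g τ - b) * exp (c * τ)) (Ici 0) :=
    (hc.sub continuousOn_const).mul (by fun_prop)
  have := eq_of_hasDerivAt_zero_Ioi hwc hw ht
  simp only [mul_zero, exp_zero, mul_one] at this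
  rw [← this, mul_assoc, ← exp_add, add_neg_cancel, exp_zero]
  ring

lemma hasDerivAt_uncurry_comp {u : ℝ → ℝ → ℝ} {φ : ℝ → ℝ} {φ' τ : ℝ}
    (hu : DifferentiableAt ℝ (uncurry u) (φ τ, τ)) (hφ : HasDerivAt φ φ' τ) :
    HasDerivAt (fun σ => u (φ σ) σ)
      (φ' * deriv (fun y => u y τ) (φ τ) + deriv (fun σ => u (φ τ) σ) τ) τ := by
  set L := fderiv ℝ (uncurry u) (φ τ, τ)
  have hx : HasDerivAt (fun y => u y τ) (L (1, 0)) (φ τ) := by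
    have : HasDerivAt (fun y => (y, τ)) ((1 : ℝ), (0 : ℝ)) (φ τ) :=
      (hasDerivAt_id _).prodMk (hasDerivAt_const _ _)
    exact hu.hasFDerivAt.comp_hasDerivAt (φ τ) this
  have ht : HasDerivAt (fun σ => u (φ τ) σ) (L (0, 1)) τ := by
    have : HasDerivAt (fun σ => (φ τ, σ)) ((0 : ℝ), (1 : ℝ)) τ :=
      (hasDerivAt_const _ _).prodMk (hasDerivAt_id _)
    exact hu.hasFDerivAt.comp_hasDerivAt τ this
  have hcurve : HasDerivAt (fun σ => u (φ σ) σ) (L (φ', 1)) τ := by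
    have : HasDerivAt (fun σ => (φ σ, σ)) (φ', (1 : ℝ)) τ := hφ.prodMk (hasDerivAt_id _)
    exact hu.hasFDerivAt.comp_hasDerivAt_of_eq τ this rfl
  rw [hx.deriv, ht.deriv, ← smul_eq_mul, ← map_smul, ← map_add]
  simpa using hcurve

noncomputable def logisticFlow (s x T τ : ℝ) : ℝ :=
  x * exp (s * (τ - T)) / (1 - x + x * exp (s * (τ - T)))

section logisticFlow

variable {s x : ℝ} (T τ : ℝ)

lemma logisticFlow_denom_pos (hx : x ∈ Icc 0 1) : 0 < 1 - x + x * exp (s * (τ - T)) := by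
  rcases hx.1.eq_or_lt with rfl | hx0
  · simp
  · nlinarith [hx.2, mul_pos hx0 (exp_pos (s * (τ - T)))]

lemma logisticFlow_mem_Icc (hx : x ∈ Icc 0 1) : logisticFlow s x T τ ∈ Icc 0 1 := by
  have hD := logisticFlow_denom_pos T τ hx (s := s)
  refine ⟨div_nonneg (mul_nonneg hx.1 (exp_pos _).le) hD.le, (div_le_one hD).2 ?_⟩
  linarith [hx.2]

@[simp]
lemma logisticFlow_self : logisticFlow s x T T = x := by
  simp [logisticFlow]

lemma hasDerivAt_logisticFlow (hx : x ∈ Icc 0 1) :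
    HasDerivAt (logisticFlow s x T)
      (s * logisticFlow s x T τ * (1 - logisticFlow s x T τ)) τ := by
  have hD := (logisticFlow_denom_pos T τ hx (s := s)).ne'
  have hE : HasDerivAt (fun σ => exp (s * (σ - T))) (exp (s * (τ - T)) * s) τ := by
    simpa using (((hasDerivAt_id τ).sub_const T).const_mul s).exp
  refine ((hE.const_mul x).div ((hE.const_mul x).const_add (1 - x)) hD).congr_deriv ?_
  simp only [logisticFlow]
  field_simp

lemma one_sub_logisticFlow_zero (hx : x ∈ Icc 0 1) :
    1 - logisticFlow s x T 0 = (1 - x) * exp (s * T) / (1 + (1 - x) * (exp (s * T) - 1)) := by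
  have hE := exp_pos (s * T)
  have hD : 0 < 1 + (1 - x) * (exp (s * T) - 1) := by
    rcases hx.1.eq_or_lt with rfl | hx0
    · simpa using hE
    · nlinarith [mul_nonneg (sub_nonneg.2 hx.2) hE.le]
  have hD₀ := (logisticFlow_denom_pos T 0 hx (s := s)).ne'
  have hflow : logisticFlow s x T 0 = x / (1 + (1 - x) * (exp (s * T) - 1)) := by
    rw [logisticFlow, div_eq_div_iff hD₀ hD.ne']
    rw [zero_sub, mul_neg, exp_neg] at hD₀ ⊢
    field_simp
    ring
  rw [hflow, one_sub_div hD.ne']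
  ring

end logisticFlow

theorem stmt_14_general (s m f : ℝ)
    (u : ℝ → ℝ → ℝ)
    (hu_c1 : ContDiff ℝ 1 (Function.uncurry u))
    (hu_pde : ∀ x ∈ Set.Icc (0:ℝ) 1, ∀ t > (0:ℝ),
      deriv (fun τ => u x τ) t + s * x * (1 - x) * deriv (fun y => u y t) x
        = m * f * (u 1 t - u x t))
    (hu_init : ∀ x ∈ Set.Icc (0:ℝ) 1, u x 0 = x) :
    ∀ x ∈ Set.Icc (0:ℝ) 1, ∀ t ≥ (0:ℝ),
      u x t = 1 - (1 - x) * Real.exp ((s - m * f) * t)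
        / (1 + (1 - x) * (Real.exp (s * t) - 1)) := by
  have hu : Differentiable ℝ (uncurry u) := hu_c1.differentiable one_ne_zero
  have hu_one : ∀ t ≥ 0, u 1 t = 1 := by
    intro t ht
    have hc : Continuous (u 1) := hu.continuous.comp (continuous_const.prodMk continuous_id)
    refine (eq_of_hasDerivAt_zero_Ioi hc.continuousOn (fun τ hτ => ?_) ht).trans
      (hu_init 1 (right_mem_Icc.2 zero_le_one))
    have hpde := hu_pde 1 (right_mem_Icc.2 zero_le_one) τ hτ
    exact (hasDerivAt_uncurry_comp (φ := fun _ => 1) (hu _) (hasDerivAt_const τ 1)).congr_deriv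
      (by simpa using hpde)
  intro x hx t ht
  have hφ : Continuous (logisticFlow s x t) :=
    continuous_iff_continuousAt.2 fun τ => (hasDerivAt_logisticFlow t τ hx).continuousAt
  have hg : ∀ τ > 0, HasDerivAt (fun τ => u (logisticFlow s x t τ) τ)
      (m * f * (1 - u (logisticFlow s x t τ) τ)) τ := by
    intro τ hτ
    refine (hasDerivAt_uncurry_comp (hu _) (hasDerivAt_logisticFlow t τ hx)).congr_deriv ?_
    linear_combination hu_pde _ (logisticFlow_mem_Icc t τ hx) τ hτ + m * f * hu_one τ hτ.le
  have hsol := eq_add_mul_exp_of_hasDerivAt (g := fun τ => u (logisticFlow s x t τ) τ)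
    (hu.continuous.comp (hφ.prodMk continuous_id)).continuousOn hg ht
  simp only [logisticFlow_self, hu_init _ (logisticFlow_mem_Icc t 0 hx)] at hsol
  rw [hsol, ← neg_sub, one_sub_logisticFlow_zero t hx, sub_mul s, exp_sub, exp_neg]
  ring

/-- uniqueness for the rare-mutation equation at `γ = 1`: any C¹
solution with initial datum `x` equals
`Z(x,t) = 1 - (1-x) e^{(s-mf)t}/(1 + (1-x)(e^{st} - 1))`. -/
theorem stmt_14 (s m f : ℝ) (hf : 0 < f) (hmf : 0 < m * f) (hs : m * f < s)
    (u : ℝ → ℝ → ℝ)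
    (hu_c1 : ContDiff ℝ 1 (Function.uncurry u))
    (hu_pde : ∀ x ∈ Set.Icc (0:ℝ) 1, ∀ t > (0:ℝ),
      deriv (fun τ => u x τ) t + s * x * (1 - x) * deriv (fun y => u y t) x
        = m * f * (u 1 t - u x t))
    (hu_init : ∀ x ∈ Set.Icc (0:ℝ) 1, u x 0 = x) :
    ∀ x ∈ Set.Icc (0:ℝ) 1, ∀ t ≥ (0:ℝ),
      u x t = 1 - (1 - x) * Real.exp ((s - m * f) * t)
        / (1 + (1 - x) * (Real.exp (s * t) - 1)) :=
  stmt_14_general s m f u hu_c1 hu_pde hu_init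
end
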